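/- Let p be a real number with 0 < p < 1, and set D = (1−p)(2−p). Define π_X = 1 − (3/2)p, π₁(0) = (1 − (3/2)p)·p/(1−p), π₁(n) = (1 − (3/2)p)·(2−p)·p^{2n}/D^{n+1} for integers n ≥ 1, and π₂(n) = (1 − (3/2)p)·p^{2n+1}/D^{n+1} for integers n ≥ 0. Then the following balance identities hold: (i) π_X = (1−p)·(π_X + π₁(0)); (ii) π₂(0) = (p/2)·(π_X + π₁(0)) + ((1−p)/2)·π₁(1); (iii) for every n ≥ 1, π₂(n) = (p/2)·π₁(n) + ((1−p)/2)·π₁(n+1); and (iv) for every n ≥ 1, π₁(n) = (2−p)·π₂(n) + p·π₂(n−1). -/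

import Mathlib

/-- Stationary probability of the empty (ground) state of the one-node `L = 2`
Bernoulli ring under the Greedy Hot Potato protocol. -/
noncomputable def ghpPiX (p : ℝ) : ℝ := 1 - (3 / 2) * p

/-- Stationary probability of holding a hot-potato packet with `1` step left to travel
and `n` packets in queue. -/
noncomputable def ghpPi1 (p : ℝ) : ℕ → ℝ := fun n =>
  if n = 0 then (1 - (3 / 2) * p) * p / (1 - p)
  else (1 - (3 / 2) * p) * (2 - p) * p ^ (2 * n) / ((1 - p) * (2 - p)) ^ (n + 1)

/-- Stationary probability of holding a hot-potato packet with `2` steps left to travel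
and `n` packets in queue. -/
noncomputable def ghpPi2 (p : ℝ) : ℕ → ℝ := fun n =>
  (1 - (3 / 2) * p) * p ^ (2 * n + 1) / ((1 - p) * (2 - p)) ^ (n + 1)

/-- Balance identities verifying the stationary distribution of the Greedy Hot Potato
chain on a one-node `L = 2` nonstandard Bernoulli ring with arrival probability
`0 < p < 1`:
(i) `π_X = (1−p)·(π_X + π₁(0))`;
(ii) `π₂(0) = (p/2)·(π_X + π₁(0)) + ((1−p)/2)·π₁(1)`;
(iii) for `n ≥ 1`, `π₂(n) = (p/2)·π₁(n) + ((1−p)/2)·π₁(n+1)`;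
(iv) for `n ≥ 1`, `π₁(n) = (2−p)·π₂(n) + p·π₂(n−1)`. -/
theorem ghp_balance_identities (p : ℝ) (hp0 : 0 < p) (hp1 : p < 1) :
    (ghpPiX p = (1 - p) * (ghpPiX p + ghpPi1 p 0)) ∧
    (ghpPi2 p 0 = (p / 2) * (ghpPiX p + ghpPi1 p 0) + ((1 - p) / 2) * ghpPi1 p 1) ∧
    (∀ n : ℕ, 1 ≤ n →
      ghpPi2 p n = (p / 2) * ghpPi1 p n + ((1 - p) / 2) * ghpPi1 p (n + 1)) ∧
    (∀ n : ℕ, 1 ≤ n →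
      ghpPi1 p n = (2 - p) * ghpPi2 p n + p * ghpPi2 p (n - 1)) := by
  have h1 : (1 : ℝ) - p ≠ 0 := by linarith
  have h2 : (2 : ℝ) - p ≠ 0 := by linarith
  have hD : (1 - p) * (2 - p) ≠ 0 := mul_ne_zero h1 h2
  have hDpow : ∀ k : ℕ, ((1 - p) * (2 - p)) ^ k ≠ 0 := fun k => pow_ne_zero k hD
  refine ⟨?_, ?_, ?_, ?_⟩
  · simp only [ghpPiX, ghpPi1, if_pos rfl, if_true]
    field_simp
    ring
  · simp only [ghpPiX, ghpPi1, ghpPi2]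
    norm_num
    field_simp
    ring
  · rintro ⟨_ | n⟩ h
    · omega
    simp only [ghpPi1, ghpPi2, Nat.succ_ne_zero, if_false, Nat.add_eq_zero,
      and_false, false_and]
    field_simp
    ring
  · rintro ⟨_ | n⟩ h
    · omega
    simp only [ghpPi1, ghpPi2, Nat.succ_ne_zero, if_false, Nat.succ_sub_one]
    field_simp
    ring
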